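/- Let A be any subset of the Baire space ωω (equipped with the induced ultrametric) and let Y be a separable metrizable space. If f : A → Y is of Baire class 1, then there is a sequence of full functions f_k : A → Y converging pointwise to f. -/

import Mathlib

open Set Filter Topology Metric

/- The Baire space `ℕ → ℕ` is equipped with the ultrametric
`dist x y = (1/2)^n` (for `x ≠ y`, `n` least with `x n ≠ y n`), and any
`A ⊆ ℕ → ℕ` carries the induced metric. -/
attribute [local instance] PiNat.metricSpaceNatNat

/-- A set is `Fσ` (i.e. `Σ⁰₂`): a countable union of closed sets. -/
def IsFsigma {X : Type*} [TopologicalSpace X] (A : Set X) : Prop :=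
  ∃ F : ℕ → Set X, (∀ n, IsClosed (F n)) ∧ A = ⋃ n, F n

/-- A subset of a metric space is full: for some constant `r > 0`, together with
each of its points it contains the open ball of radius `r` around it. -/
def IsFullSet {X : Type*} [MetricSpace X] (A : Set X) : Prop :=
  ∃ r : ℝ, 0 < r ∧ ∀ x ∈ A, Metric.ball x r ⊆ A

/-- A function is full: it has finitely many values and the preimage of each
value is a full set. -/
def IsFullFun {X Y : Type*} [MetricSpace X] (f : X → Y) : Prop :=
  (Set.range f).Finite ∧ ∀ y ∈ Set.range f, IsFullSet (f ⁻¹' {y})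

open scoped Classical
set_option linter.unusedSectionVars false
set_option maxHeartbeats 1000000

namespace BFullAux


variable {α : Type*} [MetricSpace α] {Y : Type*} [MetricSpace Y]

def lSet (C : ℕ → ℕ → Set α) (s : List ℕ) : Set α :=
  {z | ∀ r, r < s.length → z ∈ C r (s.getD r 0)}

def lVal (v : ℕ → ℕ → Y) (y0 : Y) (s : List ℕ) : Y :=
  if s.length = 0 then y0 else v (s.length - 1) (s.getD (s.length - 1) 0)

def Mt (C : ℕ → ℕ → Set α) (k : ℕ) (x : α) (s : List ℕ) : Prop :=
  ∃ z ∈ lSet C s, dist x z ≤ (1 / 2 : ℝ) ^ k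

noncomputable def ext0 (C : ℕ → ℕ → Set α) (k : ℕ) (x : α) (s : List ℕ) : List ℕ :=
  if h : ∃ i, i ≤ k ∧ Mt C k x (s ++ [i]) then s ++ [Nat.find h] else s

noncomputable def gpath (C : ℕ → ℕ → Set α) (k : ℕ) (x : α) : ℕ → List ℕ
  | 0 => []
  | d + 1 => ext0 C k x (gpath C k x d)

noncomputable def gf (C : ℕ → ℕ → Set α) (v : ℕ → ℕ → Y) (y0 : Y) (k : ℕ) (x : α) : Y :=
  lVal v y0 (gpath C k x k)

theorem lSet_concat (C : ℕ → ℕ → Set α) (s : List ℕ) (i : ℕ) :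
    lSet C (s ++ [i]) = lSet C s ∩ C s.length i := by
  ext z
  simp only [lSet, mem_setOf_eq, mem_inter_iff, List.length_append, List.length_singleton]
  constructor
  · intro h
    refine ⟨fun r hr => ?_, ?_⟩
    · have := h r (by omega)
      rwa [List.getD_append _ _ _ _ hr] at this
    · have := h s.length (by omega)
      rwa [List.getD_append_right _ _ _ _ le_rfl, Nat.sub_self] at this
  · rintro ⟨h1, h2⟩ r hr
    rcases lt_or_eq_of_le (Nat.lt_succ_iff.1 hr) with hr' | hr'
    · rw [List.getD_append _ _ _ _ hr']; exact h1 r hr'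
    · subst hr'; rwa [List.getD_append_right _ _ _ _ le_rfl, Nat.sub_self]

theorem isClosed_lSet {C : ℕ → ℕ → Set α} (hC : ∀ d i, IsClosed (C d i)) (s : List ℕ) :
    IsClosed (lSet C s) := by
  have : lSet C s = ⋂ (r : ℕ) (_ : r < s.length), C r (s.getD r 0) := by
    ext z; simp [lSet]
  rw [this]
  exact isClosed_iInter fun r => isClosed_iInter fun _ => hC _ _

theorem lVal_concat (v : ℕ → ℕ → Y) (y0 : Y) (s : List ℕ) (i : ℕ) :
    lVal v y0 (s ++ [i]) = v s.length i := by
  simp only [lVal, List.length_append, List.length_singleton]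
  rw [if_neg (by omega)]
  have h1 : s.length + 1 - 1 = s.length := by omega
  rw [h1, List.getD_append_right _ _ _ _ le_rfl, Nat.sub_self]
  rfl

theorem gpath_succ_cases (C : ℕ → ℕ → Set α) (k : ℕ) (x : α) (d : ℕ) :
    (gpath C k x (d + 1) = gpath C k x d ∧
      ∀ i, i ≤ k → ¬Mt C k x (gpath C k x d ++ [i])) ∨
    ∃ i, gpath C k x (d + 1) = gpath C k x d ++ [i] ∧ i ≤ k ∧
      Mt C k x (gpath C k x d ++ [i]) := by
  show (ext0 C k x _ = _ ∧ _) ∨ ∃ i, ext0 C k x _ = _ ∧ _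
  unfold ext0
  split_ifs with h
  · exact Or.inr ⟨Nat.find h, rfl, (Nat.find_spec h).1, (Nat.find_spec h).2⟩
  · exact Or.inl ⟨rfl, fun i hik hMt => h ⟨i, hik, hMt⟩⟩

theorem length_gpath_le (C : ℕ → ℕ → Set α) (k : ℕ) (x : α) (d : ℕ) :
    (gpath C k x d).length ≤ d := by
  induction d with
  | zero => simp [gpath]
  | succ d IH =>
    rcases gpath_succ_cases C k x d with ⟨h, -⟩ | ⟨i, h, -, -⟩ <;> rw [h]
    · omega
    · simp only [List.length_append, List.length_singleton]; omega

theorem mem_gpath_le (C : ℕ → ℕ → Set α) (k : ℕ) (x : α) (d : ℕ) :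
    ∀ j ∈ gpath C k x d, j ≤ k := by
  induction d with
  | zero => simp [gpath]
  | succ d IH =>
    rcases gpath_succ_cases C k x d with ⟨h, -⟩ | ⟨i, h, hik, -⟩ <;> rw [h]
    · exact IH
    · intro j hj
      rcases List.mem_append.1 hj with hj | hj
      · exact IH j hj
      · rw [List.mem_singleton] at hj; omega

theorem Mt_congr [IsUltrametricDist α] {C : ℕ → ℕ → Set α} {k : ℕ} {x x' : α}
    (h : dist x x' ≤ (1 / 2 : ℝ) ^ k) (s : List ℕ) :
    Mt C k x s ↔ Mt C k x' s := by
  have key : ∀ a b : α, dist a b ≤ (1 / 2 : ℝ) ^ k → ∀ s, Mt C k a s → Mt C k b s := by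
    rintro a b hab s ⟨z, hz, hdz⟩
    exact ⟨z, hz, (IsUltrametricDist.dist_triangle_max b a z).trans
      (max_le (by rwa [dist_comm]) hdz)⟩
  exact ⟨key x x' h s, key x' x (by rwa [dist_comm]) s⟩

theorem gpath_congr [IsUltrametricDist α] (C : ℕ → ℕ → Set α) {k : ℕ} {x x' : α}
    (h : dist x x' ≤ (1 / 2 : ℝ) ^ k) (d : ℕ) :
    gpath C k x d = gpath C k x' d := by
  induction d with
  | zero => rfl
  | succ d IH =>
    show ext0 C k x (gpath C k x d) = ext0 C k x' (gpath C k x' d)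
    rw [← IH]
    set s := gpath C k x d
    unfold ext0
    by_cases h1 : ∃ i, i ≤ k ∧ Mt C k x (s ++ [i])
    · have h2 : ∃ i, i ≤ k ∧ Mt C k x' (s ++ [i]) := by
        obtain ⟨i, hik, hM⟩ := h1
        exact ⟨i, hik, (Mt_congr h _).1 hM⟩
      rw [dif_pos h1, dif_pos h2]
      have : Nat.find h1 = Nat.find h2 := by
        apply le_antisymm
        · exact Nat.find_min' h1 ⟨(Nat.find_spec h2).1, (Mt_congr h _).2 (Nat.find_spec h2).2⟩
        · exact Nat.find_min' h2 ⟨(Nat.find_spec h1).1, (Mt_congr h _).1 (Nat.find_spec h1).2⟩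
      rw [this]
    · have h2 : ¬∃ i, i ≤ k ∧ Mt C k x' (s ++ [i]) := by
        rintro ⟨i, hik, hM⟩
        exact h1 ⟨i, hik, (Mt_congr h _).2 hM⟩
      rw [dif_neg h1, dif_neg h2]

theorem gf_congr [IsUltrametricDist α] (C : ℕ → ℕ → Set α) (v : ℕ → ℕ → Y) (y0 : Y)
    {k : ℕ} {x x' : α} (h : dist x x' ≤ (1 / 2 : ℝ) ^ k) :
    gf C v y0 k x = gf C v y0 k x' := by
  unfold gf; rw [gpath_congr C h]

theorem isFullFun_gf [IsUltrametricDist α] (C : ℕ → ℕ → Set α) (v : ℕ → ℕ → Y) (y0 : Y)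
    (k : ℕ) : IsFullFun (gf C v y0 k) := by
  constructor
  · apply Set.Finite.subset
      ((((Set.finite_Iic k).prod (Set.finite_Iic k)).image
        (fun p : ℕ × ℕ => v p.1 p.2)).insert y0)
    rintro - ⟨x, rfl⟩
    unfold gf lVal
    split_ifs with h
    · exact Set.mem_insert _ _
    · refine Set.mem_insert_of_mem _ ⟨⟨(gpath C k x k).length - 1,
        (gpath C k x k).getD ((gpath C k x k).length - 1) 0⟩, ⟨?_, ?_⟩, rfl⟩
      · have := length_gpath_le C k x k; simp only [Set.mem_Iic]; omega
      · simp only [Set.mem_Iic]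
        apply mem_gpath_le C k x k
        rw [List.getD_eq_getElem _ _ (by omega)]
        exact List.getElem_mem _
  · rintro y ⟨x, rfl⟩
    refine ⟨(1 / 2 : ℝ) ^ k, pow_pos (by norm_num) k, ?_⟩
    intro a ha b hb
    simp only [Set.mem_preimage, Set.mem_singleton_iff] at ha ⊢
    rw [← ha]
    have : dist a b ≤ (1 / 2 : ℝ) ^ k := by
      rw [dist_comm]; exact le_of_lt (Metric.mem_ball.1 hb)
    exact (gf_congr C v y0 this).symm

theorem chain_est (C : ℕ → ℕ → Set α) (v : ℕ → ℕ → Y) (y0 : Y) {f : α → Y}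
    (h2 : ∀ d i z, z ∈ C d i → dist (f z) (v d i) ≤ (1 / 2 : ℝ) ^ d)
    (k : ℕ) (x : α) {q : ℕ} (hq : 1 ≤ q) (hlen : (gpath C k x q).length = q) :
    ∀ e, q ≤ e → q ≤ (gpath C k x e).length ∧
      dist (lVal v y0 (gpath C k x e)) (lVal v y0 (gpath C k x q)) ≤
        6 * ((1 / 2 : ℝ) ^ q - (1 / 2) ^ (gpath C k x e).length) := by
  intro e he
  induction e, he using Nat.le_induction with
  | base => rw [hlen]; exact ⟨le_rfl, by simp⟩
  | succ e he IH =>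
    rcases gpath_succ_cases C k x e with ⟨heq, -⟩ | ⟨i, heq, hik, hMt⟩
    · rw [heq]; exact IH
    · obtain ⟨hqL, hd⟩ := IH
      set s := gpath C k x e with hs
      set L := s.length with hL
      have hL1 : 1 ≤ L := hq.trans hqL
      obtain ⟨z, hz, -⟩ := hMt
      have hz2 : z ∈ C L i := by
        rw [lSet_concat] at hz; exact hz.2
      have hz1 : z ∈ C (L - 1) (s.getD (L - 1) 0) := by
        rw [lSet_concat] at hz
        exact hz.1 (L - 1) (by omega)
      have hstep : dist (lVal v y0 (s ++ [i])) (lVal v y0 s) ≤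
          (1 / 2 : ℝ) ^ L + (1 / 2) ^ (L - 1) := by
        rw [lVal_concat]
        unfold lVal
        rw [if_neg (by omega)]
        calc dist (v L i) (v (L - 1) (s.getD (L - 1) 0))
            ≤ dist (v L i) (f z) + dist (f z) (v (L - 1) (s.getD (L - 1) 0)) :=
              dist_triangle _ _ _
          _ ≤ (1 / 2 : ℝ) ^ L + (1 / 2) ^ (L - 1) := by
              gcongr
              · rw [dist_comm]; exact h2 _ _ _ hz2
              · exact h2 _ _ _ hz1
      rw [heq]
      have hlen' : (s ++ [i]).length = L + 1 := by simp [hL]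
      constructor
      · rw [hlen']; omega
      · rw [hlen']
        calc dist (lVal v y0 (s ++ [i])) (lVal v y0 (gpath C k x q))
            ≤ dist (lVal v y0 (s ++ [i])) (lVal v y0 s)
              + dist (lVal v y0 s) (lVal v y0 (gpath C k x q)) := dist_triangle _ _ _
          _ ≤ ((1 / 2 : ℝ) ^ L + (1 / 2) ^ (L - 1))
              + 6 * ((1 / 2 : ℝ) ^ q - (1 / 2) ^ L) := by gcongr
          _ ≤ 6 * ((1 / 2 : ℝ) ^ q - (1 / 2) ^ (L + 1)) := by
              have e1 : (1 / 2 : ℝ) ^ L = (1 / 2) ^ (L - 1) * (1 / 2) := by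
                rw [← pow_succ]; congr 1; omega
              have e2 : (1 / 2 : ℝ) ^ (L + 1) = (1 / 2) ^ L * (1 / 2) := by
                rw [← pow_succ]
              rw [e2, e1]; ring_nf; nlinarith [pow_nonneg (by norm_num : (0:ℝ) ≤ 1/2) (L-1)]

theorem mem_lSet_mapT {C : ℕ → ℕ → Set α} {x : α} {T : ℕ → ℕ}
    (hT : ∀ d, x ∈ C d (T d)) (e : ℕ) : x ∈ lSet C ((List.range e).map T) := by
  intro r hr
  rw [List.length_map, List.length_range] at hr
  rw [List.getD_eq_getElem _ _ (by simpa using hr), List.getElem_map, List.getElem_range]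
  exact hT r

theorem gpath_stab {C : ℕ → ℕ → Set α} (h1 : ∀ d i, IsClosed (C d i)) (x : α)
    (T : ℕ → ℕ) (hT : ∀ d, x ∈ C d (T d)) (hTmin : ∀ d i, x ∈ C d i → T d ≤ i) :
    ∀ d, ∀ᶠ k in atTop, gpath C k x d = (List.range d).map T := by
  intro d
  induction d with
  | zero =>
    filter_upwards with k
    simp [gpath]
  | succ d IH =>
    have hbad : ∀ i, i < T d → ∀ᶠ k in atTop, ¬Mt C k x ((List.range d).map T ++ [i]) := by
      intro i hi
      have hcl : IsClosed (lSet C ((List.range d).map T ++ [i])) := isClosed_lSet h1 _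
      have hxnot : x ∉ lSet C ((List.range d).map T ++ [i]) := by
        rw [lSet_concat]
        rintro ⟨-, hxi⟩
        rw [List.length_map, List.length_range] at hxi
        exact absurd (hTmin d i hxi) (not_le.2 hi)
      have hop : IsOpen (lSet C ((List.range d).map T ++ [i]))ᶜ := hcl.isOpen_compl
      obtain ⟨ε, εpos, hball⟩ := Metric.isOpen_iff.1 hop x hxnot
      obtain ⟨K, hK⟩ := exists_pow_lt_of_lt_one εpos (by norm_num : (1 / 2 : ℝ) < 1)
      filter_upwards [eventually_ge_atTop K] with k hk
      rintro ⟨z, hz, hdist⟩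
      have hzd : dist x z < ε :=
        lt_of_le_of_lt (hdist.trans (pow_le_pow_of_le_one (by norm_num) (by norm_num) hk)) hK
      exact hball (Metric.mem_ball'.2 hzd) hz
    have hall : ∀ᶠ k in atTop, ∀ i ∈ Finset.range (T d),
        ¬Mt C k x ((List.range d).map T ++ [i]) :=
      (eventually_all_finset _).2 fun i hi => hbad i (Finset.mem_range.1 hi)
    filter_upwards [IH, hall, eventually_ge_atTop (T d)] with k hk1 hk2 hk3
    have hconcat : (List.range (d + 1)).map T = (List.range d).map T ++ [T d] := by
      rw [List.range_succ, List.map_append]; rfl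
    rw [hconcat]
    show ext0 C k x (gpath C k x d) = _
    rw [hk1]
    have hMtT : Mt C k x ((List.range d).map T ++ [T d]) := by
      refine ⟨x, ?_, by simp [dist_self, pow_nonneg (by norm_num : (0:ℝ) ≤ 1 / 2)]⟩
      rw [← hconcat]
      exact mem_lSet_mapT hT (d + 1)
    have hEx : ∃ i, i ≤ k ∧ Mt C k x ((List.range d).map T ++ [i]) := ⟨T d, hk3, hMtT⟩
    unfold ext0
    rw [dif_pos hEx]
    have hfind : Nat.find hEx = T d := by
      refine (Nat.find_eq_iff hEx).2 ⟨⟨hk3, hMtT⟩, ?_⟩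
      rintro i hi ⟨-, hM⟩
      exact hk2 i (Finset.mem_range.2 hi) hM
    rw [hfind]

theorem tendsto_gf (C : ℕ → ℕ → Set α) (v : ℕ → ℕ → Y) (y0 : Y) {f : α → Y}
    (h1 : ∀ d i, IsClosed (C d i))
    (h2 : ∀ d i z, z ∈ C d i → dist (f z) (v d i) ≤ (1 / 2 : ℝ) ^ d)
    (h3 : ∀ d z, ∃ i, z ∈ C d i) (x : α) :
    Tendsto (fun k => gf C v y0 k x) atTop (𝓝 (f x)) := by
  have h12 : (0 : ℝ) < 1 / 2 := by norm_num
  rw [Metric.tendsto_atTop]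
  intro ε εpos
  obtain ⟨q0, hq0⟩ := exists_pow_lt_of_lt_one (show (0:ℝ) < ε / 8 by linarith)
    (by norm_num : (1 / 2 : ℝ) < 1)
  set q := q0 + 1 with hqdef
  have hq1 : 1 ≤ q := by omega
  have hqε : 8 * (1 / 2 : ℝ) ^ q < ε := by
    have : (1 / 2 : ℝ) ^ q ≤ (1 / 2) ^ q0 :=
      pow_le_pow_of_le_one (by norm_num) (by norm_num) (by omega)
    nlinarith
  set T : ℕ → ℕ := fun d => Nat.find (h3 d x) with hTdef
  have hT : ∀ d, x ∈ C d (T d) := fun d => Nat.find_spec (h3 d x)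
  have hTmin : ∀ d i, x ∈ C d i → T d ≤ i := fun d i hi => Nat.find_min' (h3 d x) hi
  have hstab := gpath_stab h1 x T hT hTmin q
  obtain ⟨N, hN⟩ := (hstab.and (eventually_ge_atTop q)).exists_forall_of_atTop
  refine ⟨N, fun k hk => ?_⟩
  obtain ⟨hpq, hkq⟩ := hN k hk
  have hlen : (gpath C k x q).length = q := by rw [hpq]; simp
  obtain ⟨hqL, hdist1⟩ := chain_est C v y0 h2 k x hq1 hlen k hkq
  have hval : lVal v y0 (gpath C k x q) = v (q - 1) (T (q - 1)) := by
    rw [hpq]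
    unfold lVal
    have hlm : ((List.range q).map T).length = q := by simp
    have hget : ((List.range q).map T).getD (q - 1) 0 = T (q - 1) := by
      rw [List.getD_eq_getElem _ _ (by simp; omega), List.getElem_map, List.getElem_range]
    rw [if_neg (by omega), hlm, hget]
  have hfd : dist (lVal v y0 (gpath C k x q)) (f x) ≤ (1 / 2 : ℝ) ^ (q - 1) := by
    rw [hval, dist_comm]
    exact h2 _ _ _ (hT (q - 1))
  have hq12 : (1 / 2 : ℝ) ^ (q - 1) = 2 * (1 / 2) ^ q := by
    rw [hqdef]
    simp only [Nat.add_sub_cancel]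
    rw [pow_succ]
    ring
  have hpow : (0 : ℝ) ≤ (1 / 2 : ℝ) ^ (gpath C k x k).length :=
    pow_nonneg (by norm_num) _
  show dist (lVal v y0 (gpath C k x k)) (f x) < ε
  calc dist (lVal v y0 (gpath C k x k)) (f x)
      ≤ dist (lVal v y0 (gpath C k x k)) (lVal v y0 (gpath C k x q))
        + dist (lVal v y0 (gpath C k x q)) (f x) := dist_triangle _ _ _
    _ ≤ 6 * ((1 / 2 : ℝ) ^ q - (1 / 2) ^ (gpath C k x k).length) + (1 / 2) ^ (q - 1) :=
        add_le_add hdist1 hfd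
    _ < ε := by rw [hq12]; nlinarith

end BFullAux

/-- Let `A` be any subset of the Baire space (with the induced ultrametric) and
`Y` a separable metrizable space.  If `f : A → Y` is of Baire class 1, then
there is a sequence of full functions `f_k : A → Y` converging pointwise
to `f`. -/
theorem exists_full_sequence_of_baire_one
    {Y : Type*} [TopologicalSpace Y]
    [TopologicalSpace.SeparableSpace Y] [TopologicalSpace.MetrizableSpace Y]
    (A : Set (ℕ → ℕ)) (f : A → Y)
    (hf : ∀ U : Set Y, IsOpen U → IsFsigma (f ⁻¹' U)) :
    ∃ g : ℕ → A → Y, (∀ k, IsFullFun (g k)) ∧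
      ∀ x, Tendsto (fun k => g k x) atTop (𝓝 (f x)) := by
  classical
  by_cases hA : A.Nonempty
  · obtain ⟨x0, hx0⟩ := hA
    letI : MetricSpace Y := TopologicalSpace.metrizableSpaceMetric Y
    haveI : IsUltrametricDist (ℕ → ℕ) :=
      ⟨fun x y z => PiNat.dist_triangle_nonarch x y z⟩
    set y0 : Y := f ⟨x0, hx0⟩ with hy0
    haveI : Nonempty Y := ⟨y0⟩
    set u : ℕ → Y := TopologicalSpace.denseSeq Y
    have hu : DenseRange u := TopologicalSpace.denseRange_denseSeq Y
    choose F hFcl hFeq using fun (q i : ℕ) =>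
      hf (Metric.ball (u i) ((1 / 2) ^ q)) Metric.isOpen_ball
    set C : ℕ → ℕ → Set ↥A := fun q n => F q n.unpair.1 n.unpair.2 with hC
    set v : ℕ → ℕ → Y := fun q n => u n.unpair.1 with hv
    have h1 : ∀ d i, IsClosed (C d i) := fun d i => hFcl d _ _
    have h2 : ∀ d i z, z ∈ C d i → dist (f z) (v d i) ≤ (1 / 2 : ℝ) ^ d := by
      intro d i z hz
      have hmem : z ∈ f ⁻¹' Metric.ball (u i.unpair.1) ((1 / 2) ^ d) := by
        rw [hFeq]
        exact mem_iUnion.2 ⟨i.unpair.2, hz⟩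
      exact le_of_lt (Metric.mem_ball.1 hmem)
    have h3 : ∀ d z, ∃ i, z ∈ C d i := by
      intro d z
      obtain ⟨i, hi⟩ := hu.exists_dist_lt (f z) (pow_pos (by norm_num : (0:ℝ) < 1 / 2) d)
      have hmem : z ∈ f ⁻¹' Metric.ball (u i) ((1 / 2) ^ d) := Metric.mem_ball.2 hi
      rw [hFeq] at hmem
      obtain ⟨m, hm⟩ := mem_iUnion.1 hmem
      exact ⟨Nat.pair i m, by simpa [hC, Nat.unpair_pair] using hm⟩
    exact ⟨BFullAux.gf C v y0, fun k => BFullAux.isFullFun_gf C v y0 k,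
      fun x => BFullAux.tendsto_gf C v y0 h1 h2 h3 x⟩
  · have hAe : A = ∅ := not_nonempty_iff_eq_empty.1 hA
    haveI : IsEmpty ↥A := Set.isEmpty_coe_sort.2 hAe
    refine ⟨fun _ => f, fun k => ?_, fun x => isEmptyElim x⟩
    constructor
    · rw [Set.range_eq_empty f]
      exact Set.finite_empty
    · intro y hy
      rw [Set.range_eq_empty f] at hy
      exact absurd hy (Set.notMem_empty y)
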